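/- arXiv:2412.17582 — 2 statements merged into one kernel-verified Lean document; each statement's English description precedes it below -/
import Mathlib

section
/- Let X₁,…,X_n be independent real random variables with mean zero, finite second moments, and |X_i| ≤ M almost surely for all i. Then for every t ≥ 0, P(|Σ_{i=1}^n X_i| ≥ t) ≤ 2 exp(−t² / (2 Σ_{i=1}^n E[X_i²] + (2/3) M t)). -/
open MeasureTheory ProbabilityTheory Real

lemma fact_ge : ∀ n : ℕ, 2 * 3 ^ n ≤ (n + 2).factorial := by
  intro n
  induction n with
  | zero => simp [Nat.factorial]
  | succ k ih =>
      have : (k + 3).factorial = (k + 3) * (k + 2).factorial := rfl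
      rw [this, pow_succ]
      calc 2 * (3 ^ k * 3) = 3 * (2 * 3 ^ k) := by ring
        _ ≤ 3 * (k + 2).factorial := by omega
        _ ≤ (k + 3) * (k + 2).factorial := by
            exact Nat.mul_le_mul_right _ (by omega)

lemma key_exp_bound {u : ℝ} (h : |u| < 3) :
    Real.exp u ≤ 1 + u + u ^ 2 / (2 * (1 - |u| / 3)) := by
  have hs : Summable (fun n : ℕ => u ^ n / n.factorial) := Real.summable_pow_div_factorial u
  have hexp : Real.exp u = ∑' n : ℕ, u ^ n / n.factorial := by
    rw [Real.exp_eq_exp_ℝ, NormedSpace.exp_eq_tsum_div]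
  have hsplit := Summable.sum_add_tsum_nat_add 2 hs
  have hrange : ∑ i ∈ Finset.range 2, u ^ i / (i.factorial : ℝ) = 1 + u := by
    simp [Finset.sum_range_succ, Nat.factorial]
  have hr1 : 0 ≤ |u| / 3 := by positivity
  have hr2 : |u| / 3 < 1 := by linarith
  have hgeo : ∑' n : ℕ, (u ^ 2 / 2) * (|u| / 3) ^ n = u ^ 2 / (2 * (1 - |u| / 3)) := by
    rw [tsum_mul_left, tsum_geometric_of_lt_one hr1 hr2]
    field_simp
  have hterm : ∀ n : ℕ, u ^ (n + 2) / ((n + 2).factorial : ℝ) ≤ (u ^ 2 / 2) * (|u| / 3) ^ n := by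
    intro n
    have hnum : u ^ (n + 2) ≤ |u| ^ (n + 2) := by
      rw [← abs_pow]; exact le_abs_self _
    have hfpos : (0 : ℝ) < ((n + 2).factorial : ℝ) := by
      exact_mod_cast Nat.factorial_pos _
    have h1 : u ^ (n + 2) / ((n + 2).factorial : ℝ) ≤ |u| ^ (n + 2) / ((n + 2).factorial : ℝ) :=
      div_le_div_of_nonneg_right hnum hfpos.le |>.trans_eq rfl
    refine h1.trans ?_
    have h2 : (2 * 3 ^ n : ℝ) ≤ ((n + 2).factorial : ℝ) := by
      exact_mod_cast fact_ge n
    have h3 : |u| ^ (n + 2) / ((n + 2).factorial : ℝ) ≤ |u| ^ (n + 2) / (2 * 3 ^ n) := by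
      apply div_le_div_of_nonneg_left (by positivity) (by positivity) h2
    refine h3.trans (le_of_eq ?_)
    rw [pow_add, div_pow, ← sq_abs u]
    ring
  have htail : ∑' n : ℕ, u ^ (n + 2) / ((n + 2).factorial : ℝ) ≤ u ^ 2 / (2 * (1 - |u| / 3)) := by
    rw [← hgeo]
    refine Summable.tsum_le_tsum hterm ?_ ?_
    · exact (summable_nat_add_iff 2).mpr hs
    · exact (summable_geometric_of_lt_one hr1 hr2).mul_left _
  have : Real.exp u = (1 + u) + ∑' n : ℕ, u ^ (n + 2) / ((n + 2).factorial : ℝ) := by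
    rw [hexp, ← hsplit, hrange]
  linarith [htail, this]
lemma mgf_bound {Ω : Type*} [MeasureSpace Ω] [IsProbabilityMeasure (ℙ : Measure Ω)]
    {X : Ω → ℝ} {M c : ℝ}
    (hmeas : Measurable X) (hmean : ∫ ω, X ω ∂ℙ = 0)
    (hL2 : Integrable (fun ω => (X ω) ^ 2) ℙ)
    (hbdd : ∀ᵐ ω ∂ℙ, |X ω| ≤ M) (hc : |c| * M < 3) :
    mgf X ℙ c ≤ Real.exp (c ^ 2 * (∫ ω, (X ω) ^ 2 ∂ℙ) / (2 * (1 - |c| * M / 3))) := by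
  have hD : 0 < 1 - |c| * M / 3 := by linarith
  have hXint : Integrable X ℙ := by
    refine Integrable.mono' (integrable_const M) hmeas.aestronglyMeasurable ?_
    filter_upwards [hbdd] with ω hω
    simpa [Real.norm_eq_abs] using hω
  have hexpint : Integrable (fun ω => Real.exp (c * X ω)) ℙ := by
    refine Integrable.mono' (integrable_const (Real.exp (|c| * M)))
      (hmeas.const_mul c).exp.aestronglyMeasurable ?_
    filter_upwards [hbdd] with ω hω
    rw [Real.norm_eq_abs, abs_of_pos (Real.exp_pos _), Real.exp_le_exp]
    calc c * X ω ≤ |c * X ω| := le_abs_self _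
      _ = |c| * |X ω| := abs_mul _ _
      _ ≤ |c| * M := by
          exact mul_le_mul_of_nonneg_left hω (abs_nonneg _)
  have hpt : ∀ᵐ ω ∂ℙ, Real.exp (c * X ω) ≤
      1 + c * X ω + c ^ 2 * (X ω) ^ 2 / (2 * (1 - |c| * M / 3)) := by
    filter_upwards [hbdd] with ω hω
    have hu : |c * X ω| ≤ |c| * M := by
      rw [abs_mul]
      exact mul_le_mul_of_nonneg_left hω (abs_nonneg _)
    have hu3 : |c * X ω| < 3 := hu.trans_lt hc
    refine (key_exp_bound hu3).trans ?_
    have h1 : (c * X ω) ^ 2 / (2 * (1 - |c * X ω| / 3)) ≤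
        (c * X ω) ^ 2 / (2 * (1 - |c| * M / 3)) := by
      apply div_le_div_of_nonneg_left (by positivity) (by positivity) (by linarith)
    have h3 : (c * X ω) ^ 2 / (2 * (1 - |c| * M / 3)) =
        c ^ 2 * (X ω) ^ 2 / (2 * (1 - |c| * M / 3)) := by
      ring
    linarith [h1, h3]
  have hRHSint : Integrable (fun ω =>
      1 + c * X ω + c ^ 2 * (X ω) ^ 2 / (2 * (1 - |c| * M / 3))) ℙ := by
    apply Integrable.add
    · exact (integrable_const 1).add (hXint.const_mul c)
    · exact (hL2.const_mul _).div_const _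
  have hint : mgf X ℙ c ≤ ∫ ω, (1 + c * X ω + c ^ 2 * (X ω) ^ 2 / (2 * (1 - |c| * M / 3))) ∂ℙ :=
    integral_mono_ae hexpint hRHSint hpt
  have i1 : Integrable (fun ω => 1 + c * X ω) ℙ := by
    exact (integrable_const 1).add (hXint.const_mul c)
  have i2 : Integrable (fun ω => c ^ 2 * (X ω) ^ 2 / (2 * (1 - |c| * M / 3))) ℙ := by
    exact (hL2.const_mul _).div_const _
  have hcalc : ∫ ω, (1 + c * X ω + c ^ 2 * (X ω) ^ 2 / (2 * (1 - |c| * M / 3))) ∂ℙ =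
      1 + c ^ 2 * (∫ ω, (X ω) ^ 2 ∂ℙ) / (2 * (1 - |c| * M / 3)) := by
    rw [integral_add i1 i2, integral_add (integrable_const 1) (hXint.const_mul c),
      integral_const, integral_const_mul, hmean]
    simp only [measure_univ, probReal_univ, ENNReal.toReal_one, smul_eq_mul, one_mul, mul_zero, add_zero]
    rw [integral_div, integral_const_mul]
  refine hint.trans ?_
  rw [hcalc]
  have := Real.add_one_le_exp (c ^ 2 * (∫ ω, (X ω) ^ 2 ∂ℙ) / (2 * (1 - |c| * M / 3)))
  linarith

lemma integrable_exp_bdd {Ω : Type*} [MeasureSpace Ω] [IsProbabilityMeasure (ℙ : Measure Ω)]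
    {X : Ω → ℝ} {M c : ℝ} (hmeas : Measurable X) (hbdd : ∀ᵐ ω ∂ℙ, |X ω| ≤ M) :
    Integrable (fun ω => Real.exp (c * X ω)) ℙ := by
  refine Integrable.mono' (integrable_const (Real.exp (|c| * M)))
    (hmeas.const_mul c).exp.aestronglyMeasurable ?_
  filter_upwards [hbdd] with ω hω
  rw [Real.norm_eq_abs, abs_of_pos (Real.exp_pos _), Real.exp_le_exp]
  calc c * X ω ≤ |c * X ω| := le_abs_self _
    _ = |c| * |X ω| := abs_mul _ _
    _ ≤ |c| * M := mul_le_mul_of_nonneg_left hω (abs_nonneg _)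

/-- Bernstein's inequality for independent, centered, uniformly bounded real random
variables. -/
theorem bernstein_inequality
    {Ω : Type*} [MeasureSpace Ω] [IsProbabilityMeasure (ℙ : Measure Ω)]
    {n : ℕ} (X : Fin n → Ω → ℝ) (M t : ℝ)
    (hmeas : ∀ i, Measurable (X i))
    (hindep : iIndepFun X ℙ)
    (hmean : ∀ i, ∫ ω, X i ω ∂ℙ = 0)
    (hL2 : ∀ i, Integrable (fun ω => (X i ω) ^ 2) ℙ)
    (hbdd : ∀ i, ∀ᵐ ω ∂ℙ, |X i ω| ≤ M)
    (ht : 0 ≤ t) :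
    ℙ {ω | t ≤ |∑ i, X i ω|} ≤
      ENNReal.ofReal
        (2 * Real.exp (-(t ^ 2) /
          (2 * (∑ i, ∫ ω, (X i ω) ^ 2 ∂ℙ) + 2 / 3 * M * t))) := by
  by_cases ht0 : t = 0
  · subst ht0
    refine le_trans prob_le_one ?_
    norm_num
  have htpos : 0 < t := lt_of_le_of_ne ht (Ne.symm ht0)
  set V : ℝ := ∑ i, ∫ ω, (X i ω) ^ 2 ∂ℙ with hVdef
  have hVnonneg : 0 ≤ V :=
    Finset.sum_nonneg fun i _ => integral_nonneg fun ω => sq_nonneg _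
  by_cases hV0 : V = 0
  · -- all X i vanish a.e.
    have hzero : ∀ i, ∀ᵐ ω ∂ℙ, X i ω = 0 := by
      intro i
      have hterm : ∫ ω, (X i ω) ^ 2 ∂ℙ = 0 := by
        have := (Finset.sum_eq_zero_iff_of_nonneg
          (fun i _ => integral_nonneg fun ω => sq_nonneg (X i ω))).mp hV0
        exact this i (Finset.mem_univ i)
      have := (integral_eq_zero_iff_of_nonneg (fun ω => sq_nonneg (X i ω)) (hL2 i)).mp hterm
      filter_upwards [this] with ω hω
      exact pow_eq_zero_iff (n := 2) (by norm_num) |>.mp hω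
    have hae : ∀ᵐ ω ∂ℙ, ¬ (t ≤ |∑ i, X i ω|) := by
      filter_upwards [ae_all_iff.2 hzero] with ω hω
      rw [Finset.sum_congr rfl fun i _ => hω i]
      simp [htpos.not_ge]
    have hnull : ℙ {ω | t ≤ |∑ i, X i ω|} = 0 := by
      have h := ae_iff.mp hae
      simpa [not_not] using h
    rw [hnull]
    exact zero_le
  have hVpos : 0 < V := lt_of_le_of_ne hVnonneg (Ne.symm hV0)
  have hn : n ≠ 0 := by
    rintro rfl
    simp [hVdef] at hV0
  have hM : 0 ≤ M := by
    have : (ℙ : Measure Ω) ≠ 0 := IsProbabilityMeasure.ne_zero _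
    haveI : (MeasureTheory.ae (ℙ : Measure Ω)).NeBot := ae_neBot.mpr this
    obtain ⟨ω, hω⟩ := (hbdd ⟨0, Nat.pos_of_ne_zero hn⟩).exists
    exact (abs_nonneg _).trans hω
  set D : ℝ := V + M * t / 3 with hDdef
  have hD : 0 < D := by positivity
  set c : ℝ := t / D with hcdef
  have hcpos : 0 < c := div_pos htpos hD
  have habs : |c| = c := abs_of_pos hcpos
  have hc3 : |c| * M < 3 := by
    rw [habs, hcdef, div_mul_eq_mul_div, div_lt_iff₀ hD]
    have h3D : 3 * D = 3 * V + M * t := by rw [hDdef]; ring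
    nlinarith [hVpos, htpos, hM, h3D]
  have hc3' : |(-c)| * M < 3 := by rwa [abs_neg]
  -- mgf bound for the sum
  have hmgf : ∀ c' : ℝ, |c'| * M < 3 →
      mgf (∑ i, X i) ℙ c' ≤ Real.exp (c' ^ 2 * V / (2 * (1 - |c'| * M / 3))) := by
    intro c' h
    rw [hindep.mgf_sum hmeas Finset.univ]
    calc ∏ i, mgf (X i) ℙ c'
        ≤ ∏ i, Real.exp (c' ^ 2 * (∫ ω, (X i ω) ^ 2 ∂ℙ) / (2 * (1 - |c'| * M / 3))) :=
          Finset.prod_le_prod (fun i _ => mgf_nonneg)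
            (fun i _ => mgf_bound (hmeas i) (hmean i) (hL2 i) (hbdd i) h)
      _ = Real.exp (∑ i, c' ^ 2 * (∫ ω, (X i ω) ^ 2 ∂ℙ) / (2 * (1 - |c'| * M / 3))) :=
          (Real.exp_sum _ _).symm
      _ = Real.exp (c' ^ 2 * V / (2 * (1 - |c'| * M / 3))) := by
          rw [← Finset.sum_div, ← Finset.mul_sum]
  have hint : ∀ c' : ℝ, Integrable (fun ω => Real.exp (c' * (∑ i, X i) ω)) ℙ := by
    intro c'
    exact hindep.integrable_exp_mul_sum hmeas fun i _ => integrable_exp_bdd (hmeas i) (hbdd i)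
  -- the exponent
  have hexpo : -c * t + c ^ 2 * V / (2 * (1 - |c| * M / 3)) =
      -(t ^ 2) / (2 * V + 2 / 3 * M * t) := by
    rw [habs]
    have h1 : 1 - c * M / 3 = V / D := by
      rw [hcdef]
      field_simp
      ring
    rw [h1, hcdef]
    have h2D : (2 : ℝ) * V + 2 / 3 * M * t = 2 * D := by rw [hDdef]; ring
    rw [h2D]
    field_simp
    ring
  -- Chernoff bounds
  have hup : (ℙ {ω | t ≤ (∑ i, X i) ω}).toReal ≤
      Real.exp (-(t ^ 2) / (2 * V + 2 / 3 * M * t)) := by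
    refine (measure_ge_le_exp_mul_mgf t hcpos.le (hint c)).trans ?_
    rw [← hexpo, Real.exp_add]
    exact mul_le_mul_of_nonneg_left (hmgf c hc3) (Real.exp_pos _).le
  have hlow : (ℙ {ω | (∑ i, X i) ω ≤ -t}).toReal ≤
      Real.exp (-(t ^ 2) / (2 * V + 2 / 3 * M * t)) := by
    have h := measure_le_le_exp_mul_mgf (μ := ℙ) (X := ∑ i, X i) (-t)
      (neg_nonpos.mpr hcpos.le) (hint (-c))
    refine h.trans ?_
    have : -(-c) * -t = -c * t := by ring
    rw [this, ← hexpo, Real.exp_add]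
    exact mul_le_mul_of_nonneg_left (by simpa using hmgf (-c) hc3') (Real.exp_pos _).le
  -- union bound
  have hsub : {ω | t ≤ |∑ i, X i ω|} ⊆
      {ω | t ≤ (∑ i, X i) ω} ∪ {ω | (∑ i, X i) ω ≤ -t} := by
    intro ω hω
    simp only [Set.mem_setOf_eq] at hω
    rcases le_abs.mp hω with h | h
    · left; simpa [Finset.sum_apply] using h
    · right
      simp only [Set.mem_setOf_eq, Finset.sum_apply]
      linarith [h]
  have hmeasle : ℙ {ω | t ≤ |∑ i, X i ω|} ≤
      ℙ {ω | t ≤ (∑ i, X i) ω} + ℙ {ω | (∑ i, X i) ω ≤ -t} :=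
    (measure_mono hsub).trans (measure_union_le _ _)
  rw [ENNReal.le_ofReal_iff_toReal_le (measure_ne_top _ _) (by positivity)]
  calc (ℙ {ω | t ≤ |∑ i, X i ω|}).toReal
      ≤ (ℙ {ω | t ≤ (∑ i, X i) ω} + ℙ {ω | (∑ i, X i) ω ≤ -t}).toReal :=
        ENNReal.toReal_mono (by finiteness) hmeasle
    _ = (ℙ {ω | t ≤ (∑ i, X i) ω}).toReal + (ℙ {ω | (∑ i, X i) ω ≤ -t}).toReal :=
        ENNReal.toReal_add (measure_ne_top _ _) (measure_ne_top _ _)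
    _ ≤ 2 * Real.exp (-(t ^ 2) / (2 * V + 2 / 3 * M * t)) := by linarith [hup, hlow]
end

section
/- Let q ∈ ℕ with q ≥ 2 and let σ_q(x) = max{0,x}^q. There exists a one-hidden-layer σ_q-neural network realizing the multiplication map exactly: there exist finitely many a_i, b_i, c_i, d_i ∈ ℝ such that x·y = Σ_i a_i σ_q(b_i x + c_i y + d_i) for all x, y ∈ ℝ. -/
open Finset Matrix

lemma powA (q : ℕ) (hq : 2 ≤ q) (u : ℝ) :
    u ^ q = max 0 u ^ q + (-1:ℝ) ^ q * max 0 (-u) ^ q := by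
  have hq0 : q ≠ 0 := by omega
  rcases le_total 0 u with h | h
  · rw [max_eq_right h, max_eq_left (by linarith), zero_pow hq0]; ring
  · rw [max_eq_left h, max_eq_right (by linarith), zero_pow hq0, ← mul_pow]; ring

lemma sqB (q : ℕ) (hq : 2 ≤ q) :
    ∃ c : Fin (q+1) → ℝ, ∀ u : ℝ, u ^ 2 = ∑ k, c k * (u + (k:ℝ)) ^ q := by
  set V := Matrix.vandermonde (fun k : Fin (q+1) => (k:ℝ)) with hV
  have hdet : V.det ≠ 0 := by
    rw [Matrix.det_vandermonde_ne_zero_iff]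
    intro i j hij
    exact_mod_cast Fin.val_injective (Nat.cast_injective hij)
  set v : Fin (q+1) → ℝ := fun m => if (m:ℕ) = q - 2 then (q.choose 2 : ℝ)⁻¹ else 0 with hv
  set c : Fin (q+1) → ℝ := Vᵀ⁻¹.mulVec v with hc
  have hsolve : Vᵀ.mulVec c = v := by
    rw [hc, Matrix.mulVec_mulVec,
      Matrix.mul_nonsing_inv _ (isUnit_iff_ne_zero.mpr (by rwa [Matrix.det_transpose])), Matrix.one_mulVec]
  have hs : ∀ j : Fin (q+1), ∑ k : Fin (q+1), ((k:ℕ):ℝ) ^ (j:ℕ) * c k = v j := by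
    intro j
    have := congrFun hsolve j
    simpa [hV, Matrix.mulVec, dotProduct, Matrix.vandermonde] using this
  have hC : ((q.choose 2 : ℕ) : ℝ) ≠ 0 := by
    have : 0 < q.choose 2 := Nat.choose_pos hq
    positivity
  refine ⟨c, fun u => ?_⟩
  rw [eq_comm]
  calc ∑ k, c k * (u + ((k:ℕ):ℝ)) ^ q
      = ∑ k : Fin (q+1), ∑ j ∈ range (q+1),
          c k * (u ^ j * ((k:ℕ):ℝ) ^ (q - j) * (q.choose j : ℝ)) := by
        simp_rw [add_pow, Finset.mul_sum]
    _ = ∑ j ∈ range (q+1), ∑ k : Fin (q+1),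
          c k * (u ^ j * ((k:ℕ):ℝ) ^ (q - j) * (q.choose j : ℝ)) := Finset.sum_comm
    _ = ∑ j ∈ range (q+1), (q.choose j : ℝ) * u ^ j *
          ∑ k : Fin (q+1), ((k:ℕ):ℝ) ^ (q - j) * c k := by
        congr 1; ext j; rw [Finset.mul_sum]; congr 1; ext k; ring
    _ = ∑ j ∈ range (q+1), (q.choose j : ℝ) * u ^ j *
          (if q - j = q - 2 then (q.choose 2 : ℝ)⁻¹ else 0) := by
        refine Finset.sum_congr rfl fun j hj => ?_
        rw [Finset.mem_range] at hj
        have hjq : q - j < q + 1 := by omega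
        have h2 := hs ⟨q - j, hjq⟩
        simp only [hv] at h2
        exact congrArg (fun t => (q.choose j : ℝ) * u ^ j * t) h2
    _ = u ^ 2 := by
        rw [Finset.sum_congr rfl (fun j hj => ?_), Finset.sum_ite_eq' (range (q+1)) 2
          (fun j => (q.choose j : ℝ) * u ^ j * (q.choose 2 : ℝ)⁻¹)]
        · rw [if_pos (Finset.mem_range.mpr (by omega))]
          field_simp
        · rw [Finset.mem_range] at hj
          by_cases h : j = 2
          · subst h; rw [if_pos rfl, if_pos (by omega)]
          · rw [if_neg h, if_neg (by omega), mul_zero]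

/-- A one-hidden-layer `σ_q`-network (with `σ_q(x) = max{0,x}^q`, `q ≥ 2`) can realize
the multiplication map exactly. -/
theorem repu_exact_multiplication (q : ℕ) (hq : 2 ≤ q) :
    ∃ (m : ℕ) (a b c d : Fin m → ℝ),
      ∀ x y : ℝ, x * y = ∑ i, a i * max 0 (b i * x + c i * y + d i) ^ q := by
  obtain ⟨co, hco⟩ := sqB q hq
  set ι := Fin (q+1) × Fin 2 × Fin 2
  set A : ι → ℝ := fun i => (1/4) * co i.1 * (if i.2.1 = 0 then 1 else -1) *
    (if i.2.2 = 0 then 1 else (-1:ℝ)^q) with hA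
  set B : ι → ℝ := fun i => if i.2.2 = 0 then 1 else -1 with hB
  set C : ι → ℝ := fun i => (if i.2.2 = 0 then (1:ℝ) else -1) *
    (if i.2.1 = 0 then 1 else -1) with hC
  set D : ι → ℝ := fun i => (if i.2.2 = 0 then (1:ℝ) else -1) * (i.1 : ℕ) with hD
  have key : ∀ x y : ℝ, x * y = ∑ i : ι, A i * max 0 (B i * x + C i * y + D i) ^ q := by
    intro x y
    rw [Fintype.sum_prod_type]
    have inner : ∀ k : Fin (q+1), ∑ j : Fin 2 × Fin 2,
        A (k, j) * max 0 (B (k, j) * x + C (k, j) * y + D (k, j)) ^ q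
        = (1/4) * co k * ((x + y + (k:ℕ)) ^ q - (x - y + (k:ℕ)) ^ q) := by
      intro k
      rw [Fintype.sum_prod_type, Fin.sum_univ_two]
      simp only [Fin.sum_univ_two, hA, hB, hC, hD]
      norm_num
      rw [show -x + -y + -((k:ℕ):ℝ) = -(x + y + (k:ℕ)) by ring,
        show -x + y + -((k:ℕ):ℝ) = -(x - y + (k:ℕ)) by ring,
        show x + -y + ((k:ℕ):ℝ) = x - y + (k:ℕ) by ring]
      linear_combination (1/4 * co k) * (powA q hq (x + y + (k:ℕ))).symm
        - (1/4 * co k) * (powA q hq (x - y + (k:ℕ))).symm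
    rw [Finset.sum_congr rfl (fun k _ => inner k)]
    have h1 := hco (x + y)
    have h2 := hco (x - y)
    have : ∑ k : Fin (q+1), (1/4) * co k * ((x + y + (k:ℕ)) ^ q - (x - y + (k:ℕ)) ^ q)
        = (1/4) * ((x+y)^2 - (x-y)^2) := by
      rw [h1, h2, ← Finset.sum_sub_distrib, Finset.mul_sum]
      exact Finset.sum_congr rfl fun k _ => by ring
    rw [this]; ring
  refine ⟨Fintype.card ι, A ∘ (Fintype.equivFin ι).symm, B ∘ (Fintype.equivFin ι).symm,
    C ∘ (Fintype.equivFin ι).symm, D ∘ (Fintype.equivFin ι).symm, fun x y => ?_⟩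
  rw [key x y, ← Equiv.sum_comp (Fintype.equivFin ι).symm
    (fun i => A i * max 0 (B i * x + C i * y + D i) ^ q)]
  rfl
end
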